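/- Let W be a finite Coxeter group. Fix w ∈ W and for v ∈ W let v_w be the unique maximal-length element of {x : x ≤_R v and x ≤ w}. Then for every v ∈ W, v_w⁻¹v ≤_R w⁻¹w₀. -/

import Mathlib

open List

set_option linter.unusedSectionVars false
set_option linter.unusedVariables false

/-- Helper monoid for the reflection cocycle. -/
structure DGrp (W : Type*) where
  fn : W → ZMod 2
  el : W

namespace DGrp

variable {W : Type*} [Group W]

instance : One (DGrp W) := ⟨⟨fun _ => 0, 1⟩⟩
instance : Mul (DGrp W) := ⟨fun a b => ⟨fun t => a.fn t + b.fn (a.el⁻¹ * t * a.el), a.el * b.el⟩⟩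

@[simp] lemma mul_fn (a b : DGrp W) (t : W) :
    (a * b).fn t = a.fn t + b.fn (a.el⁻¹ * t * a.el) := rfl
@[simp] lemma mul_el (a b : DGrp W) : (a * b).el = a.el * b.el := rfl
@[simp] lemma one_fn (t : W) : (1 : DGrp W).fn t = 0 := rfl
@[simp] lemma one_el : (1 : DGrp W).el = 1 := rfl

lemma ext' {a b : DGrp W} (h1 : a.fn = b.fn) (h2 : a.el = b.el) : a = b := by
  cases a; cases b; cases h1; cases h2; rfl

instance : Monoid (DGrp W) where
  mul_assoc a b c := ext' (funext fun t => by
    simp [mul_assoc, mul_inv_rev, add_assoc]) (by simp [mul_assoc])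
  one_mul a := ext' (funext fun t => by simp) (by simp)
  mul_one a := ext' (funext fun t => by simp) (by simp)

lemma pow_el (a : DGrp W) (k : ℕ) : (a ^ k).el = a.el ^ k := by
  induction k with
  | zero => simp
  | succ k ih => rw [pow_succ, pow_succ, mul_el, ih]

lemma pow_fn (a : DGrp W) (k : ℕ) (t : W) :
    (a ^ k).fn t = ∑ r ∈ Finset.range k, a.fn ((a.el ^ r)⁻¹ * t * a.el ^ r) := by
  induction k with
  | zero => simp
  | succ k ih => rw [pow_succ, mul_fn, ih, Finset.sum_range_succ, pow_el]

end DGrp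

open Classical in
/-- Indicator function of `x`, valued in `ZMod 2`. -/
noncomputable def dind {W : Type*} (x : W) : W → ZMod 2 := fun t => if t = x then 1 else 0

lemma dind_conj {W : Type*} [Group W] (a x y : W) :
    dind x (a⁻¹ * y * a) = dind (a * x * a⁻¹) y := by
  have h : (a⁻¹ * y * a = x) ↔ (y = a * x * a⁻¹) :=
    ⟨fun h => by rw [← h]; group, fun h => by rw [h]; group⟩
  unfold dind
  by_cases hy : y = a * x * a⁻¹
  · rw [if_pos (h.mpr hy), if_pos hy]
  · rw [if_neg (fun hx => hy (h.mp hx)), if_neg hy]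

lemma zmod2_cases (a : ZMod 2) : a = 0 ∨ a = 1 := by revert a; decide
lemma zmod2_add_self (a : ZMod 2) : a + a = 0 := by revert a; decide
lemma zmod2_eq_of_add_zero {a b : ZMod 2} (h : a + b = 0) : b = a := by revert a b; decide

namespace CoxeterSystem

variable {B W : Type*} [Group W] {M : CoxeterMatrix B} (cs : CoxeterSystem M W)

local prefix:100 "s" => cs.simple
local prefix:100 "π" => cs.wordProd
local prefix:100 "ℓ" => cs.length
local prefix:100 "lis" => cs.leftInvSeq
local prefix:100 "ris" => cs.rightInvSeq

noncomputable def dgen (i : B) : DGrp W := ⟨dind (s i), s i⟩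

lemma dgen_fn (i : B) : (cs.dgen i).fn = dind (s i) := rfl
lemma dgen_el (i : B) : (cs.dgen i).el = s i := rfl

lemma dgen_liftable : M.IsLiftable (cs.dgen) := by
  intro i i'
  set c := s i * s i' with hc
  set m := M i i' with hm
  have hcm : c ^ m = 1 := cs.simple_mul_simple_pow i i'
  have hel : ((cs.dgen i * cs.dgen i') ^ m).el = 1 := by
    rw [DGrp.pow_el]; exact hcm
  have hsi : s i = c * s i' := by
    rw [hc, mul_assoc, cs.simple_mul_simple_self, mul_one]
  have key1 : ∀ r : ℕ, c ^ r * (s i) * (c ^ r)⁻¹ = c ^ (2 * r + 1) * s i' := by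
    intro r
    have hconj : (c ^ r)⁻¹ = s i * c ^ r * s i := by
      have h1 : s i * c * (s i)⁻¹ = c⁻¹ := by
        rw [hc, cs.inv_simple]
        calc s i * (s i * s i') * s i = (s i * s i) * (s i' * s i) := by group
        _ = s i' * s i := by rw [cs.simple_mul_simple_self, one_mul]
        _ = (s i * s i')⁻¹ := by rw [mul_inv_rev, cs.inv_simple, cs.inv_simple]
      have h2 : s i * c ^ r * (s i)⁻¹ = (s i * c * (s i)⁻¹) ^ r := (conj_pow).symm
      rw [h1, inv_pow] at h2
      rw [← h2, cs.inv_simple]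
    rw [hconj]
    calc c ^ r * s i * (s i * c ^ r * s i)
        = c ^ r * (s i * s i) * c ^ r * s i := by group
    _ = c ^ r * c ^ r * s i := by rw [cs.simple_mul_simple_self, mul_one]
    _ = c ^ r * c ^ r * (c * s i') := by rw [hsi]
    _ = c ^ (2 * r + 1) * s i' := by
        rw [show 2*r+1 = r+(r+1) by ring, pow_add, pow_succ]; group
  have key2 : ∀ r : ℕ, c ^ r * (s i * s i' * s i) * (c ^ r)⁻¹ = c ^ (2 * r + 2) * s i' := by
    intro r
    have hconj' : (c ^ (r+1))⁻¹ = s i' * c ^ (r+1) * s i' := by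
      have h1 : s i' * c * (s i')⁻¹ = c⁻¹ := by
        rw [hc, cs.inv_simple]
        calc s i' * (s i * s i') * s i' = s i' * s i * (s i' * s i') := by group
        _ = s i' * s i := by rw [cs.simple_mul_simple_self, mul_one]
        _ = (s i * s i')⁻¹ := by rw [mul_inv_rev, cs.inv_simple, cs.inv_simple]
      have h2 : s i' * c ^ (r+1) * (s i')⁻¹ = (s i' * c * (s i')⁻¹) ^ (r+1) := (conj_pow).symm
      rw [h1, inv_pow] at h2
      rw [← h2, cs.inv_simple]
    have hX : s i * s i' * s i = c * s i' * c⁻¹ := by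
      rw [hc, mul_inv_rev, cs.inv_simple, cs.inv_simple]
      calc s i * s i' * s i = s i * s i' * (s i' * s i') * s i := by
            rw [cs.simple_mul_simple_self, mul_one]
      _ = s i * s i' * s i' * (s i' * s i) := by group
      _ = _ := by group
    rw [hX]
    calc c ^ r * (c * s i' * c⁻¹) * (c ^ r)⁻¹
        = c ^ (r+1) * s i' * (c ^ (r+1))⁻¹ := by rw [pow_succ]; group
    _ = c ^ (r+1) * s i' * (s i' * c ^ (r+1) * s i') := by rw [hconj']
    _ = c ^ (r+1) * (s i' * s i') * c ^ (r+1) * s i' := by group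
    _ = c ^ (r+1) * c ^ (r+1) * s i' := by rw [cs.simple_mul_simple_self, mul_one]
    _ = c ^ (2 * r + 2) * s i' := by
        rw [show 2*r+2 = (r+1)+(r+1) by ring, pow_add]; group
  apply DGrp.ext' _ hel
  funext t
  rw [DGrp.pow_fn, DGrp.one_fn]
  have hxel : (cs.dgen i * cs.dgen i').el = c := rfl
  rw [hxel]
  have hsummand : ∀ r ∈ Finset.range m, (cs.dgen i * cs.dgen i').fn ((c ^ r)⁻¹ * t * c ^ r)
      = dind (c ^ (2 * r + 1) * s i') t + dind (c ^ (2 * r + 2) * s i') t := by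
    intro r _
    rw [DGrp.mul_fn, dgen_fn, dgen_fn, dgen_el]
    rw [show (s i)⁻¹ * ((c ^ r)⁻¹ * t * c ^ r) * s i
        = (c ^ r * s i)⁻¹ * t * (c ^ r * s i) by group]
    rw [dind_conj (c ^ r) (s i) t, dind_conj (c ^ r * s i) (s i') t]
    rw [key1 r]
    congr 1
    rw [show c ^ r * s i * s i' * (c ^ r * s i)⁻¹
        = c ^ r * (s i * s i' * s i) * (c ^ r)⁻¹ by rw [mul_inv_rev, cs.inv_simple]; group]
    rw [key2 r]
  rw [Finset.sum_congr rfl hsummand]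
  set g : ℕ → ZMod 2 := fun k => dind (c ^ k * s i') t with hg
  have hpair : ∀ mm : ℕ, ∑ r ∈ Finset.range mm, (g (2*r+1) + g (2*r+2))
      = ∑ k ∈ Finset.range (2*mm), g (k+1) := by
    intro mm
    induction mm with
    | zero => simp
    | succ p ih =>
      rw [Finset.sum_range_succ, ih, show 2 * (p + 1) = 2 * p + 1 + 1 by ring,
        Finset.sum_range_succ, Finset.sum_range_succ,
        show 2 * p + 1 + 1 = 2 * p + 2 by ring]
      ring
  have hshift : ∀ k : ℕ, g (m + k + 1) = g (k + 1) := fun k => by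
    simp only [hg, show m + k + 1 = m + (k+1) by ring, pow_add, hcm, one_mul]
  calc ∑ r ∈ Finset.range m, (g (2*r+1) + g (2*r+2))
      = ∑ k ∈ Finset.range (m + m), g (k+1) := by rw [hpair m]; congr 1; ring
    _ = (∑ k ∈ Finset.range m, g (k+1)) + ∑ k ∈ Finset.range m, g (m + k + 1) := by
        rw [Finset.sum_range_add]
    _ = (∑ k ∈ Finset.range m, g (k+1)) + ∑ k ∈ Finset.range m, g (k + 1) := by
        rw [Finset.sum_congr rfl fun k _ => hshift k]
    _ = 0 := zmod2_add_self _

end CoxeterSystem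

namespace CoxeterSystem
variable {B W : Type*} [Group W] {M : CoxeterMatrix B} (cs : CoxeterSystem M W)

local prefix:100 "s" => cs.simple
local prefix:100 "π" => cs.wordProd
local prefix:100 "ℓ" => cs.length
local prefix:100 "lis" => cs.leftInvSeq
local prefix:100 "ris" => cs.rightInvSeq

/-- The reflection cocycle homomorphism. -/
noncomputable def dphi : W →* DGrp W := cs.lift ⟨cs.dgen, cs.dgen_liftable⟩

/-- Projection to the group component. -/
def delHom (W : Type*) [Group W] : DGrp W →* W where
  toFun := DGrp.el
  map_one' := rfl
  map_mul' := fun _ _ => rfl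

lemma dphi_el (w : W) : (cs.dphi w).el = w := by
  have h : ((delHom W).comp cs.dphi) = MonoidHom.id W := by
    apply cs.ext_simple
    intro i
    show (cs.dphi (s i)).el = s i
    rw [dphi, cs.lift_apply_simple]
    rfl
  exact DFunLike.congr_fun h w

/-- `nn w t` is the mod-2 number of times `t` occurs as a left inversion of `w`. -/
noncomputable def nn (w t : W) : ZMod 2 := (cs.dphi w).fn t

lemma nn_mul (a b t : W) : cs.nn (a * b) t = cs.nn a t + cs.nn b (a⁻¹ * t * a) := by
  unfold nn
  rw [map_mul, DGrp.mul_fn, dphi_el]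

lemma nn_simple (i : B) (t : W) : cs.nn (s i) t = dind (s i) t := by
  unfold nn
  rw [dphi, cs.lift_apply_simple]
  rfl

lemma nn_one (t : W) : cs.nn 1 t = 0 := by
  unfold nn
  rw [map_one, DGrp.one_fn]

lemma nn_count [DecidableEq W] (ω : List B) (t : W) :
    cs.nn (π ω) t = ((lis ω).count t : ZMod 2) := by
  induction ω generalizing t with
  | nil => simp [nn_one]
  | cons i ω ih =>
    rw [cs.wordProd_cons, nn_mul, nn_simple, ih]
    show dind (s i) t + (↑((lis ω).count ((s i)⁻¹ * t * s i)) : ZMod 2) = _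
    have hl : lis (i :: ω) = s i :: List.map (MulAut.conj (s i)) (lis ω) := rfl
    rw [hl, List.count_cons]
    have hinj : Function.Injective (⇑(MulAut.conj (s i))) := (MulAut.conj (s i)).injective
    have h2 : (List.map (⇑(MulAut.conj (s i))) (lis ω)).count t
        = (lis ω).count ((s i)⁻¹ * t * s i) := by
      have ht : t = (MulAut.conj (s i)) ((s i)⁻¹ * t * s i) := by
        rw [MulAut.conj_apply]; group
      nth_rw 1 [ht]
      exact List.count_map_of_injective _ _ hinj _
    rw [h2]
    push_cast
    rw [add_comm]
    congr 1
    unfold dind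
    by_cases hts : t = s i
    · rw [if_pos hts, if_pos (beq_iff_eq.mpr hts.symm)]
    · rw [if_neg hts, if_neg]
      simp only [beq_iff_eq]
      exact fun h => hts h.symm
  
lemma mem_leftInvSeq_of_nn_one {ω : List B} {t : W} (h : cs.nn (π ω) t = 1) :
    t ∈ lis ω := by
  classical
  by_contra hmem
  rw [cs.nn_count, List.count_eq_zero_of_not_mem hmem] at h
  simp at h

lemma nn_one_of_mem_leftInvSeq {ω : List B} (hω : cs.IsReduced ω) {t : W}
    (h : t ∈ lis ω) : cs.nn (π ω) t = 1 := by
  classical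
  rw [cs.nn_count, List.count_eq_one_of_mem (hω.nodup_leftInvSeq) h]
  rfl

lemma nn_inv_conj (v x : W) : cs.nn v⁻¹ (v⁻¹ * x * v) = cs.nn v x := by
  apply zmod2_eq_of_add_zero
  rw [← cs.nn_mul v v⁻¹ x, mul_inv_cancel, nn_one]

lemma nn_refl_self {t : W} (ht : cs.IsReflection t) : cs.nn t t = 1 := by
  obtain ⟨v, i, rfl⟩ := ht
  set t := v * s i * v⁻¹ with hts
  have h1 : t = v * (s i * v⁻¹) := by rw [hts, mul_assoc]
  have hv : v⁻¹ * t * v = s i := by rw [hts]; group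
  rw [h1, nn_mul, ← h1, hv, nn_mul, nn_simple, cs.inv_simple]
  have h3 : s i * s i * s i = s i := by rw [cs.simple_mul_simple_self, one_mul]
  rw [h3]
  have h4 : cs.nn v⁻¹ (s i) = cs.nn v t := by
    rw [← hv]; exact cs.nn_inv_conj v t
  rw [h4]
  have h5 : dind (s i) (s i) = 1 := by unfold dind; rw [if_pos rfl]
  rw [h5]
  have := zmod2_add_self (cs.nn v t)
  -- goal: nn v t + (1 + nn v t) = 1
  rw [show cs.nn v t + (1 + cs.nn v t) = (cs.nn v t + cs.nn v t) + 1 by ring, this, zero_add]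

/-- Key inversion criterion: `t` is a left inversion of `w` iff `nn w t = 1`. -/
lemma length_lt_iff_nn_one {w t : W} (ht : cs.IsReflection t) :
    ℓ (t * w) < ℓ w ↔ cs.nn w t = 1 := by
  constructor
  · intro hlt
    rcases zmod2_cases (cs.nn w t) with h0 | h1
    · exfalso
      -- w = t * (t * w), so nn w t = nn t t + nn (t*w) t
      have hw : w = t * (t * w) := by rw [← mul_assoc, ht.mul_self, one_mul]
      have heq : cs.nn w t = 1 + cs.nn (t * w) t := by
        nth_rw 1 [hw]
        rw [nn_mul, cs.nn_refl_self ht]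
        congr 1
        rw [ht.inv]
        congr 1
        calc t * t * t = 1 * t := by rw [ht.mul_self]
        _ = t := one_mul t
      rw [h0] at heq
      have h1' : cs.nn (t * w) t = 1 := by
        rcases zmod2_cases (cs.nn (t * w) t) with h | h
        · rw [h] at heq; simp at heq
        · exact h
      -- then t is a left inversion of t * w
      obtain ⟨ω, hred, hw'⟩ := cs.exists_reduced_word' (t * w)
      rw [hw'] at h1'
      have hmem := cs.mem_leftInvSeq_of_nn_one h1'
      have := cs.isLeftInversion_of_mem_leftInvSeq hred hmem
      rw [← hw'] at this
      have h2 := this.2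
      rw [← mul_assoc, ht.mul_self, one_mul] at h2
      omega
    · exact h1
  · intro h1
    obtain ⟨ω, hred, hw'⟩ := cs.exists_reduced_word' w
    rw [hw'] at h1 ⊢
    exact (cs.isLeftInversion_of_mem_leftInvSeq hred (cs.mem_leftInvSeq_of_nn_one h1)).2

/-- Left strong exchange: membership form. -/
lemma mem_leftInvSeq_of_isLeftInversion {ω : List B} (hω : cs.IsReduced ω) {t : W}
    (ht : cs.IsReflection t) (hlt : ℓ (t * π ω) < ℓ (π ω)) : t ∈ lis ω :=
  cs.mem_leftInvSeq_of_nn_one ((cs.length_lt_iff_nn_one ht).mp hlt)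

/-- Left exchange: deletion form. -/
lemma left_exchange {ω : List B} (hω : cs.IsReduced ω) {t : W}
    (ht : cs.IsReflection t) (hlt : ℓ (t * π ω) < ℓ (π ω)) :
    ∃ j < ω.length, t * π ω = π (ω.eraseIdx j) := by
  have hmem := cs.mem_leftInvSeq_of_isLeftInversion hω ht hlt
  obtain ⟨j, hj, hjt⟩ := List.mem_iff_getElem.mp hmem
  rw [cs.length_leftInvSeq] at hj
  refine ⟨j, hj, ?_⟩
  rw [← hjt, ← List.getD_eq_getElem _ 1, cs.getD_leftInvSeq_mul_wordProd]

/-- Right exchange: deletion form. -/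
lemma right_exchange {ω : List B} (hω : cs.IsReduced ω) {t : W}
    (ht : cs.IsReflection t) (hlt : ℓ (π ω * t) < ℓ (π ω)) :
    ∃ j < ω.length, π ω * t = π (ω.eraseIdx j) := by
  have hrev : cs.IsReduced ω.reverse := (cs.isReduced_reverse_iff ω).mpr hω
  have hinv : π (ω.reverse) = (π ω)⁻¹ := cs.wordProd_reverse ω
  have hlt' : ℓ (t * π ω.reverse) < ℓ (π ω.reverse) := by
    rw [hinv]
    have h1 : t * (π ω)⁻¹ = (π ω * t)⁻¹ := by rw [mul_inv_rev, ht.inv]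
    rw [h1, cs.length_inv, cs.length_inv]
    exact hlt
  have hmem := cs.mem_leftInvSeq_of_isLeftInversion hrev ht hlt'
  rw [cs.leftInvSeq_reverse, List.mem_reverse] at hmem
  obtain ⟨j, hj, hjt⟩ := List.mem_iff_getElem.mp hmem
  rw [cs.length_rightInvSeq] at hj
  refine ⟨j, hj, ?_⟩
  rw [← hjt, ← List.getD_eq_getElem _ 1, cs.wordProd_mul_getD_rightInvSeq]

end CoxeterSystem

namespace CoxeterSystem
variable {B W : Type*} [Group W] {M : CoxeterMatrix B} (cs : CoxeterSystem M W)

local prefix:100 "s" => cs.simple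
local prefix:100 "π" => cs.wordProd
local prefix:100 "ℓ" => cs.length

/-- Every word has a reduced sublist with the same product. -/
lemma exists_reduced_sublist (ω : List B) :
    ∃ δ : List B, δ.Sublist ω ∧ cs.IsReduced δ ∧ π δ = π ω := by
  induction ω with
  | nil => exact ⟨[], List.Sublist.refl _, by simp [IsReduced], rfl⟩
  | cons i ω ih =>
    obtain ⟨δ, hsub, hred, hprod⟩ := ih
    by_cases hr : cs.IsReduced (i :: δ)
    · exact ⟨i :: δ, hsub.cons₂ i, hr, by rw [cs.wordProd_cons, cs.wordProd_cons, hprod]⟩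
    · have hlen : ℓ (π (i :: δ)) ≠ (i :: δ).length := hr
      have hcons : π (i :: δ) = s i * π δ := cs.wordProd_cons i δ
      have hd : ℓ (s i * π δ) + 1 = ℓ (π δ) := by
        rcases cs.length_simple_mul (π δ) i with h | h
        · exfalso
          apply hlen
          rw [hcons, h, hred]
          simp
        · exact h
      obtain ⟨j, hj, hje⟩ := cs.left_exchange hred (cs.isReflection_simple i) (by omega)
      refine ⟨δ.eraseIdx j, ?_, ?_, ?_⟩
      · exact ((δ.eraseIdx_sublist j).trans hsub).trans (List.sublist_cons_self i ω)
      · show ℓ (π (δ.eraseIdx j)) = (δ.eraseIdx j).length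
        rw [← hje]
        have h1 : (δ.eraseIdx j).length + 1 = δ.length := List.length_eraseIdx_add_one hj
        have h2 : ℓ (π δ) = δ.length := hred
        omega
      · rw [← hje, cs.wordProd_cons, hprod]

/-- One step in the Bruhat order: multiply on the right by a reflection, length goes up. -/
def bstep (x y : W) : Prop := ∃ t, cs.IsReflection t ∧ y = x * t ∧ ℓ x < ℓ y

/-- The Bruhat order, as the reflexive-transitive closure of `bstep`. -/
def ble : W → W → Prop := Relation.ReflTransGen cs.bstep

lemma ble_refl (x : W) : cs.ble x x := Relation.ReflTransGen.refl

lemma ble.trans {cs : CoxeterSystem M W} {x y z : W} (h1 : cs.ble x y) (h2 : cs.ble y z) :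
    cs.ble x z :=
  Relation.ReflTransGen.trans h1 h2

lemma ble_of_bstep {x y : W} (h : cs.bstep x y) : cs.ble x y :=
  Relation.ReflTransGen.single h

lemma ble_mul_right {x t : W} (ht : cs.IsReflection t) (h : ℓ x < ℓ (x * t)) :
    cs.ble x (x * t) :=
  cs.ble_of_bstep ⟨t, ht, rfl, h⟩

lemma ble_mul_left {x t : W} (ht : cs.IsReflection t) (h : ℓ x < ℓ (t * x)) :
    cs.ble x (t * x) := by
  have h1 : t * x = x * (x⁻¹ * t * x) := by group
  rw [h1] at h ⊢
  exact cs.ble_mul_right (by simpa using ht.conj x⁻¹) h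

lemma ble_length_le {x y : W} (h : cs.ble x y) : ℓ x ≤ ℓ y := by
  induction h with
  | refl => exact le_refl _
  | tail _ hstep ih =>
    obtain ⟨t, _, rfl, hlt⟩ := hstep
    omega

/-- `ble` implies subword of EVERY reduced word. -/
lemma ble_subword {x y : W} (h : cs.ble x y) :
    ∀ γ : List B, cs.IsReduced γ → π γ = y →
      ∃ σ : List B, σ.Sublist γ ∧ cs.IsReduced σ ∧ π σ = x := by
  induction h with
  | refl => exact fun γ hred hprod => ⟨γ, List.Sublist.refl _, hred, hprod⟩
  | tail hxb hbc ih =>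
    intro γ hred hprod
    obtain ⟨t, ht, rfl, hlt⟩ := hbc
    have hbexp := congrArg (fun z => z * t) hprod
    simp only [mul_assoc, ht.mul_self, mul_one] at hbexp
    have hct : ℓ (π γ * t) < ℓ (π γ) := by
      rw [hbexp, hprod]
      exact hlt
    obtain ⟨j, hj, hje⟩ := cs.right_exchange hred ht hct
    obtain ⟨δ, hsub, hredδ, hprodδ⟩ := cs.exists_reduced_sublist (γ.eraseIdx j)
    obtain ⟨σ, hsubσ, hredσ, hprodσ⟩ := ih δ hredδ (by rw [hprodδ, ← hje, hbexp])
    exact ⟨σ, (hsubσ.trans hsub).trans (γ.eraseIdx_sublist j), hredσ, hprodσ⟩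

/-- The A/B/C package: subword property, lifting property, and ascent-monotonicity,
by simultaneous strong induction. -/
theorem ABC : ∀ n : ℕ,
    (∀ ω : List B, cs.IsReduced ω → ω.length ≤ n → ∀ σ : List B, σ.Sublist ω →
      cs.ble (π σ) (π ω)) ∧
    (∀ y : W, ℓ y ≤ n → ∀ i : B, ℓ (s i * y) < ℓ y → ∀ x : W, cs.ble x y →
      (ℓ x < ℓ (s i * x) → cs.ble (s i * x) y ∧ cs.ble x (s i * y)) ∧
      (ℓ (s i * x) < ℓ x → cs.ble (s i * x) (s i * y))) ∧
    (∀ y : W, ℓ y ≤ n → ∀ i : B, ℓ y < ℓ (s i * y) → ∀ x : W, cs.ble x y →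
      ℓ x < ℓ (s i * x) → cs.ble (s i * x) (s i * y)) := by
  intro n
  induction n using Nat.strong_induction_on with
  | _ n IH =>
  -- Part C first
  have hC : ∀ y : W, ℓ y ≤ n → ∀ i : B, ℓ y < ℓ (s i * y) → ∀ x : W, cs.ble x y →
      ℓ x < ℓ (s i * x) → cs.ble (s i * x) (s i * y) := by
    intro y hy i hasc x hxy hxasc
    rcases Relation.ReflTransGen.cases_tail hxy with rfl | ⟨z, hxz, hstep⟩
    · exact cs.ble_refl _
    · obtain ⟨t, ht, rfl, hltz⟩ := hstep
      have hzn : ℓ z < n := by omega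
      have hsy : ℓ (s i * (z * t)) = ℓ (z * t) + 1 := by
        rcases cs.length_simple_mul (z * t) i with h | h
        · exact h
        · omega
      rcases cs.length_simple_mul z i with hzasc | hzdesc
      · -- ascent at z: use C at level ℓ z
        have hCz := (IH (ℓ z) hzn).2.2 z (le_refl _) i (by omega) x hxz hxasc
        refine hCz.trans (cs.ble_of_bstep ⟨t, ht, (mul_assoc _ _ _).symm, ?_⟩)
        rw [hzasc, hsy]
        omega
      · -- descent at z: use B at level ℓ z
        have hBz := ((IH (ℓ z) hzn).2.1 z (le_refl _) i (by omega) x hxz).1 hxasc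
        refine (hBz.1.trans (cs.ble_of_bstep ⟨t, ht, rfl, hltz⟩)).trans ?_
        have h1 : s i * (z * t) = (z * t) * ((z*t)⁻¹ * s i * (z*t)) := by group
        rw [h1]
        refine cs.ble_of_bstep ⟨_, by simpa using (cs.isReflection_simple i).conj (z*t)⁻¹, rfl, ?_⟩
        rw [← h1]
        exact hasc
  -- Part B
  have hB : ∀ y : W, ℓ y ≤ n → ∀ i : B, ℓ (s i * y) < ℓ y → ∀ x : W, cs.ble x y →
      (ℓ x < ℓ (s i * x) → cs.ble (s i * x) y ∧ cs.ble x (s i * y)) ∧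
      (ℓ (s i * x) < ℓ x → cs.ble (s i * x) (s i * y)) := by
    intro y hy i hdesc x hxy
    have hy1 : 1 ≤ ℓ y := by
      by_contra h
      have : ℓ y = 0 := by omega
      omega
    have hldesc : ℓ (s i * y) + 1 = ℓ y := by
      rcases cs.length_simple_mul y i with h | h
      · omega
      · exact h
    obtain ⟨γ', hred', heq'⟩ := cs.exists_reduced_word' (s i * y)
    have hlen' : γ'.length = ℓ y - 1 := by
      have : ℓ (s i * y) = γ'.length := by rw [heq']; exact hred' 
      omega
    have hγprod : π (i :: γ') = y := by
      rw [cs.wordProd_cons, ← heq', ← mul_assoc, cs.simple_mul_simple_self, one_mul]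
    have hγred : cs.IsReduced (i :: γ') := by
      show ℓ (π (i :: γ')) = (i :: γ').length
      rw [hγprod]
      simp only [List.length_cons]
      omega
    obtain ⟨σ, hsub, hredσ, hprodσ⟩ := cs.ble_subword hxy (i :: γ') hγred hγprod
    cases hsub with
    | cons _ hsub' =>
      -- σ is a sublist of γ'
      have hxsy : cs.ble x (s i * y) := by
        have := (IH γ'.length (by omega)).1 γ' hred' (le_refl _) σ hsub'
        rw [hprodσ, ← heq'] at this
        exact this
      constructor
      · intro hxasc
        refine ⟨?_, hxsy⟩
        have hCsy := (IH (ℓ y - 1) (by omega)).2.2 (s i * y) (by omega) i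
          (by rw [← mul_assoc, cs.simple_mul_simple_self, one_mul]; omega) x hxsy hxasc
        rw [← mul_assoc, cs.simple_mul_simple_self, one_mul] at hCsy
        exact hCsy
      · intro hxdesc
        have h1 : cs.ble (s i * x) x := by
          have h2 : x = s i * (s i * x) := by
            rw [← mul_assoc, cs.simple_mul_simple_self, one_mul]
          nth_rw 2 [h2]
          exact cs.ble_mul_left (cs.isReflection_simple i) (by rw [← h2]; exact hxdesc)
        exact h1.trans hxsy
    | cons_cons _ hsub' =>
      -- σ = i :: σ₁ with σ₁ <+ γ'
      rename_i σ₁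
      have hprod₁ : π σ₁ = s i * x := by
        rw [← hprodσ, cs.wordProd_cons, ← mul_assoc, cs.simple_mul_simple_self, one_mul]
      have hxdesc : ℓ (s i * x) + 1 = ℓ x := by
        have e1 : ℓ (π (i :: σ₁)) = (i :: σ₁).length := hredσ
        have e2 : ℓ (π σ₁) ≤ σ₁.length := cs.length_wordProd_le σ₁
        rw [hprodσ] at e1
        rw [hprod₁] at e2
        simp only [List.length_cons] at e1
        rcases cs.length_simple_mul x i with h | h
        · omega
        · exact h
      constructor
      · intro hxasc
        omega
      · intro _
        have := (IH γ'.length (by omega)).1 γ' hred' (le_refl _) σ₁ hsub'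
        rw [hprod₁, ← heq'] at this
        exact this
  -- Part A
  have hA : ∀ ω : List B, cs.IsReduced ω → ω.length ≤ n → ∀ σ : List B, σ.Sublist ω →
      cs.ble (π σ) (π ω) := by
    intro ω hred hlen σ hsub
    cases ω with
    | nil =>
      rw [List.sublist_nil.mp hsub]
      exact cs.ble_refl _
    | cons i ω₁ =>
      have hred₁ : cs.IsReduced ω₁ := by
        have := hred.drop 1
        simpa using this
      have hlω : ℓ (π (i :: ω₁)) = ω₁.length + 1 := by
        rw [hred]; simp
      have hω₁len : ℓ (π ω₁) = ω₁.length := hred₁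
      have hasc : ℓ (π ω₁) < ℓ (s i * π ω₁) := by
        rw [cs.wordProd_cons] at hlω
        omega
      have hstep_up : cs.ble (π ω₁) (π (i :: ω₁)) := by
        rw [cs.wordProd_cons]
        exact cs.ble_mul_left (cs.isReflection_simple i) hasc
      cases hsub with
      | cons _ hsub' =>
        have := (IH ω₁.length (by simp at hlen; omega)).1 ω₁ hred₁ (le_refl _) σ hsub'
        exact this.trans hstep_up
      | cons_cons _ hsub' =>
        rename_i σ₁
        have hble₁ := (IH ω₁.length (by simp at hlen; omega)).1 ω₁ hred₁ (le_refl _) σ₁ hsub'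
        rw [cs.wordProd_cons, cs.wordProd_cons]
        rcases cs.length_simple_mul (π σ₁) i with hasc₁ | hdesc₁
        · -- ascent: apply C at level ω₁.length
          exact (IH ω₁.length (by simp at hlen; omega)).2.2 (π ω₁) (le_of_eq hω₁len) i hasc
            (π σ₁) hble₁ (by omega)
        · -- descent: s i * π σ₁ is below π σ₁
          have h1 : cs.ble (s i * π σ₁) (π σ₁) := by
            have h2 : π σ₁ = s i * (s i * π σ₁) := by
              rw [← mul_assoc, cs.simple_mul_simple_self, one_mul]
            nth_rw 2 [h2]
            exact cs.ble_mul_left (cs.isReflection_simple i) (by rw [← h2]; omega)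
          exact (h1.trans hble₁).trans
            (cs.ble_mul_left (cs.isReflection_simple i) hasc)
  exact ⟨hA, hB, hC⟩

end CoxeterSystem

namespace CoxeterSystem
variable {B W : Type*} [Group W] {M : CoxeterMatrix B} (cs : CoxeterSystem M W)

local prefix:100 "s" => cs.simple
local prefix:100 "π" => cs.wordProd
local prefix:100 "ℓ" => cs.length

lemma bstep_inv {x y : W} (h : cs.bstep x y) : cs.bstep x⁻¹ y⁻¹ := by
  obtain ⟨t, ht, rfl, hlt⟩ := h
  refine ⟨x * t * x⁻¹, ht.conj x, ?_, ?_⟩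
  · rw [mul_inv_rev, ht.inv]
    group
  · rw [cs.length_inv, cs.length_inv]
    exact hlt

lemma ble_inv {x y : W} (h : cs.ble x y) : cs.ble x⁻¹ y⁻¹ := by
  induction h with
  | refl => exact cs.ble_refl _
  | tail _ hstep ih => exact ih.trans (cs.ble_of_bstep (cs.bstep_inv hstep))

/-- Right-handed lifting, part 1a. -/
lemma lift_r1a {y x : W} {i : B} (hdesc : ℓ (y * s i) < ℓ y) (hxy : cs.ble x y)
    (hasc : ℓ x < ℓ (x * s i)) : cs.ble (x * s i) y := by
  have hyn : ℓ y⁻¹ ≤ ℓ y⁻¹ := le_refl _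
  have hd' : ℓ (s i * y⁻¹) < ℓ y⁻¹ := by
    rw [show s i * y⁻¹ = (y * s i)⁻¹ by rw [mul_inv_rev, cs.inv_simple], cs.length_inv,
      cs.length_inv]
    exact hdesc
  have ha' : ℓ x⁻¹ < ℓ (s i * x⁻¹) := by
    rw [show s i * x⁻¹ = (x * s i)⁻¹ by rw [mul_inv_rev, cs.inv_simple], cs.length_inv,
      cs.length_inv]
    exact hasc
  have := (((cs.ABC (ℓ y⁻¹)).2.1 y⁻¹ hyn i hd' x⁻¹ (cs.ble_inv hxy)).1 ha').1
  have h2 := cs.ble_inv this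
  rw [show (s i * x⁻¹)⁻¹ = x * s i by rw [mul_inv_rev, cs.inv_simple, inv_inv], inv_inv] at h2
  exact h2

/-- Right-handed lifting, part 1b. -/
lemma lift_r1b {y x : W} {i : B} (hdesc : ℓ (y * s i) < ℓ y) (hxy : cs.ble x y)
    (hasc : ℓ x < ℓ (x * s i)) : cs.ble x (y * s i) := by
  have hd' : ℓ (s i * y⁻¹) < ℓ y⁻¹ := by
    rw [show s i * y⁻¹ = (y * s i)⁻¹ by rw [mul_inv_rev, cs.inv_simple], cs.length_inv,
      cs.length_inv]
    exact hdesc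
  have ha' : ℓ x⁻¹ < ℓ (s i * x⁻¹) := by
    rw [show s i * x⁻¹ = (x * s i)⁻¹ by rw [mul_inv_rev, cs.inv_simple], cs.length_inv,
      cs.length_inv]
    exact hasc
  have := (((cs.ABC (ℓ y⁻¹)).2.1 y⁻¹ (le_refl _) i hd' x⁻¹ (cs.ble_inv hxy)).1 ha').2
  have h2 := cs.ble_inv this
  rw [show (s i * y⁻¹)⁻¹ = y * s i by rw [mul_inv_rev, cs.inv_simple, inv_inv], inv_inv] at h2
  exact h2

/-- Right-handed lifting, part 2. -/
lemma lift_r2 {y x : W} {i : B} (hdesc : ℓ (y * s i) < ℓ y) (hxy : cs.ble x y)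
    (hxdesc : ℓ (x * s i) < ℓ x) : cs.ble (x * s i) (y * s i) := by
  have hd' : ℓ (s i * y⁻¹) < ℓ y⁻¹ := by
    rw [show s i * y⁻¹ = (y * s i)⁻¹ by rw [mul_inv_rev, cs.inv_simple], cs.length_inv,
      cs.length_inv]
    exact hdesc
  have ha' : ℓ (s i * x⁻¹) < ℓ x⁻¹ := by
    rw [show s i * x⁻¹ = (x * s i)⁻¹ by rw [mul_inv_rev, cs.inv_simple], cs.length_inv,
      cs.length_inv]
    exact hxdesc
  have := ((cs.ABC (ℓ y⁻¹)).2.1 y⁻¹ (le_refl _) i hd' x⁻¹ (cs.ble_inv hxy)).2 ha'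
  have h2 := cs.ble_inv this
  rw [show (s i * y⁻¹)⁻¹ = y * s i by rw [mul_inv_rev, cs.inv_simple, inv_inv],
    show (s i * x⁻¹)⁻¹ = x * s i by rw [mul_inv_rev, cs.inv_simple, inv_inv]] at h2
  exact h2

end CoxeterSystem


/-- The right weak Bruhat order: `u ≤_R v` iff `ℓ(u) + ℓ(u⁻¹v) = ℓ(v)`. -/
def rWeak {B W : Type*} [Group W] {M : CoxeterMatrix B} (cs : CoxeterSystem M W)
    (u v : W) : Prop :=
  cs.length u + cs.length (u⁻¹ * v) = cs.length v

/-- The strong Bruhat order: `u ≤ v` iff some reduced word for `v` has a subword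
which is a word for `u`. -/
def bruhat {B W : Type*} [Group W] {M : CoxeterMatrix B} (cs : CoxeterSystem M W)
    (u v : W) : Prop :=
  ∃ ω : List B, cs.IsReduced ω ∧ cs.wordProd ω = v ∧
    ∃ ω' : List B, ω'.Sublist ω ∧ cs.wordProd ω' = u

namespace CoxeterSystem
variable {B W : Type*} [Group W] {M : CoxeterMatrix B} (cs : CoxeterSystem M W)

local prefix:100 "s" => cs.simple
local prefix:100 "π" => cs.wordProd
local prefix:100 "ℓ" => cs.length

lemma bruhat_iff_ble {u w : W} : bruhat cs u w ↔ cs.ble u w := by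
  constructor
  · rintro ⟨ω, hred, hw, σ, hsub, hu⟩
    have := (cs.ABC ω.length).1 ω hred (le_refl _) σ hsub
    rwa [hu, hw] at this
  · intro h
    obtain ⟨γ, hred, hprod⟩ := cs.exists_reduced_word' w
    obtain ⟨σ, hsub, _, hprodσ⟩ := cs.ble_subword h γ hred hprod.symm
    exact ⟨γ, hred, hprod.symm, σ, hsub, hprodσ⟩

lemma rweak_of_desc {x v : W} {i : B} (hx : rWeak cs x v) (hd : ℓ (x * s i) < ℓ x) :
    rWeak cs (x * s i) v := by
  unfold rWeak at hx ⊢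
  have h1 : (x * s i)⁻¹ * v = s i * (x⁻¹ * v) := by
    rw [mul_inv_rev, cs.inv_simple, mul_assoc]
  rw [h1]
  have h2 : ℓ (s i * (x⁻¹ * v)) ≤ 1 + ℓ (x⁻¹ * v) := by
    have := cs.length_mul_le (s i) (x⁻¹ * v)
    simpa using this
  have h3 : ℓ v ≤ ℓ (x * s i) + ℓ (s i * (x⁻¹ * v)) := by
    have := cs.length_mul_le (x * s i) (s i * (x⁻¹ * v))
    rw [show x * s i * (s i * (x⁻¹ * v)) = v by
      rw [← mul_assoc, mul_assoc x (s i) (s i), cs.simple_mul_simple_self, mul_one,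
        ← mul_assoc, mul_inv_cancel, one_mul]] at this
    exact this
  have h4 : ℓ (x * s i) + 1 = ℓ x := by
    rcases cs.length_mul_simple x i with h | h
    · omega
    · exact h
  omega

/-- The main inductive lemma: if `u` is the maximal element below both `v` (right weak)
and `w` (Bruhat), then `ℓ(w · u⁻¹v) = ℓ(w) + ℓ(u⁻¹v)`. -/
lemma key_length_add (v : W) : ∀ n : ℕ, ∀ u w : W, ℓ (u⁻¹ * v) ≤ n →
    rWeak cs u v → bruhat cs u w →
    (∀ x : W, rWeak cs x v → bruhat cs x w → ℓ x ≤ ℓ u) →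
    ℓ (w * (u⁻¹ * v)) = ℓ w + ℓ (u⁻¹ * v) := by
  intro n
  induction n with
  | zero =>
    intro u w hn _ _ _
    have : ℓ (u⁻¹ * v) = 0 := by omega
    rw [this, (cs.length_eq_zero_iff).mp this]
    simp
  | succ n IHn =>
    intro u w hn hrw hb hmax
    by_cases hz1 : u⁻¹ * v = 1
    · rw [hz1]; simp
    · obtain ⟨i, hdesc⟩ := cs.exists_leftDescent_of_ne_one hz1
      have h1 : ℓ (s i * (u⁻¹ * v)) + 1 = ℓ (u⁻¹ * v) := (cs.isLeftDescent_iff).mp hdesc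
      have hz' : (u * s i)⁻¹ * v = s i * (u⁻¹ * v) := by
        rw [mul_inv_rev, cs.inv_simple, mul_assoc]
      have h2 : ℓ (u * s i) = ℓ u + 1 := by
        have hub : ℓ (u * s i) ≤ ℓ u + 1 := by
          have := cs.length_mul_le u (s i)
          simpa using this
        have hlb : ℓ v ≤ ℓ (u * s i) + ℓ (s i * (u⁻¹ * v)) := by
          have := cs.length_mul_le (u * s i) ((u * s i)⁻¹ * v)
          rw [show u * s i * ((u * s i)⁻¹ * v) = v by group] at this
          rw [← hz']
          exact this
        have hv : ℓ u + ℓ (u⁻¹ * v) = ℓ v := hrw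
        omega
      have h3 : rWeak cs (u * s i) v := by
        unfold rWeak
        rw [hz', h2]
        have hv : ℓ u + ℓ (u⁻¹ * v) = ℓ v := hrw
        omega
      have h4 : ¬ bruhat cs (u * s i) w := by
        intro hc
        have := hmax (u * s i) h3 hc
        omega
      have hble_uw : cs.ble u w := (cs.bruhat_iff_ble).mp hb
      have h5 : ℓ (w * s i) = ℓ w + 1 := by
        rcases cs.length_mul_simple w i with h | h
        · exact h
        · exfalso
          apply h4
          apply (cs.bruhat_iff_ble).mpr
          exact cs.lift_r1a (by omega) hble_uw (by omega)
      have h6 : cs.ble u (w * s i) :=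
        hble_uw.trans (cs.ble_mul_right (cs.isReflection_simple i) (by omega))
      have hws_desc : ℓ ((w * s i) * s i) < ℓ (w * s i) := by
        rw [mul_assoc, cs.simple_mul_simple_self, mul_one]
        omega
      have h7 : bruhat cs (u * s i) (w * s i) :=
        (cs.bruhat_iff_ble).mpr (cs.lift_r1a hws_desc h6 (by omega))
      have h8 : ∀ x : W, rWeak cs x v → bruhat cs x (w * s i) → ℓ x ≤ ℓ (u * s i) := by
        intro x hxv hxw
        have hblex : cs.ble x (w * s i) := (cs.bruhat_iff_ble).mp hxw
        rcases cs.length_mul_simple x i with hasc | hdescx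
        · -- ascent: x ≤ w
          have := cs.lift_r1b hws_desc hblex (by omega)
          rw [mul_assoc, cs.simple_mul_simple_self, mul_one] at this
          have := hmax x hxv ((cs.bruhat_iff_ble).mpr this)
          omega
        · -- descent: x * s i ≤ w
          have hx2 := cs.lift_r2 hws_desc hblex (by omega)
          rw [mul_assoc, cs.simple_mul_simple_self, mul_one] at hx2
          have hxv2 : rWeak cs (x * s i) v := cs.rweak_of_desc hxv (by omega)
          have := hmax (x * s i) hxv2 ((cs.bruhat_iff_ble).mpr hx2)
          omega
      have hrec := IHn (u * s i) (w * s i) (by rw [hz']; omega) h3 h7 h8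
      rw [hz'] at hrec
      rw [show w * s i * (s i * (u⁻¹ * v)) = w * (u⁻¹ * v) by
        rw [← mul_assoc, mul_assoc w (s i) (s i), cs.simple_mul_simple_self, mul_one]] at hrec
      omega

end CoxeterSystem

namespace CoxeterSystem
variable {B W : Type*} [Group W] {M : CoxeterMatrix B} (cs : CoxeterSystem M W)

local prefix:100 "s" => cs.simple
local prefix:100 "π" => cs.wordProd
local prefix:100 "ℓ" => cs.length

section Counting

variable [Fintype W] [DecidableEq W]

open Finset

/-- The set of left inversions of `x`, via the cocycle. -/
noncomputable def invSet (x : W) : Finset W :=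
  Finset.univ.filter (fun t => cs.nn x t = 1)

lemma mem_invSet {x t : W} : t ∈ cs.invSet x ↔ cs.nn x t = 1 := by
  unfold invSet
  simp

lemma invSet_eq_lis {x : W} {ω : List B} (hred : cs.IsReduced ω) (hx : π ω = x) :
    cs.invSet x = (cs.leftInvSeq ω).toFinset := by
  ext t
  rw [cs.mem_invSet, List.mem_toFinset, ← hx]
  constructor
  · exact cs.mem_leftInvSeq_of_nn_one
  · exact cs.nn_one_of_mem_leftInvSeq hred

lemma card_invSet (x : W) : (cs.invSet x).card = ℓ x := by
  obtain ⟨ω, hred, hx⟩ := cs.exists_reduced_word' x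
  rw [cs.invSet_eq_lis hred hx.symm, List.toFinset_card_of_nodup hred.nodup_leftInvSeq,
    cs.length_leftInvSeq]
  rw [hx]
  exact hred.symm

lemma isReflection_of_mem_invSet {x t : W} (h : t ∈ cs.invSet x) : cs.IsReflection t := by
  rw [cs.mem_invSet] at h
  obtain ⟨ω, hred, hx⟩ := cs.exists_reduced_word' x
  rw [hx] at h
  exact cs.isReflection_of_mem_leftInvSeq ω (cs.mem_leftInvSeq_of_nn_one h)

lemma mem_invSet_longest {w₀ : W} (hlong : ∀ u : W, ℓ u ≤ ℓ w₀) {t : W}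
    (ht : cs.IsReflection t) : t ∈ cs.invSet w₀ := by
  rw [cs.mem_invSet]
  rw [← cs.length_lt_iff_nn_one ht]
  have h1 := ht.length_mul_right_ne w₀
  have h2 := hlong (t * w₀)
  omega

/-- Length additivity for factorizations of the longest element. -/
lemma length_add_of_longest {w₀ : W} (hlong : ∀ u : W, ℓ u ≤ ℓ w₀) (x y : W)
    (hxy : x * y = w₀) : ℓ x + ℓ y = ℓ w₀ := by
  have hle : ℓ w₀ ≤ ℓ x + ℓ y := by
    rw [← hxy]
    exact cs.length_mul_le x y
  -- the two inversion sets
  set A := cs.invSet x with hA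
  set Bs := (cs.invSet y).image (fun t => x * t * x⁻¹) with hBs
  have hBcard : Bs.card = ℓ y := by
    rw [hBs, Finset.card_image_of_injective _ (fun a b hab =>
      mul_left_cancel (mul_right_cancel hab)), cs.card_invSet]
  have hdisj : Disjoint A Bs := by
    rw [Finset.disjoint_left]
    intro t htA htB
    rw [hBs, Finset.mem_image] at htB
    obtain ⟨r, hr, rfl⟩ := htB
    rw [hA, cs.mem_invSet] at htA
    rw [cs.mem_invSet] at hr
    have hnn : cs.nn w₀ (x * r * x⁻¹) = 0 := by
      rw [← hxy, cs.nn_mul, htA]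
      rw [show x⁻¹ * (x * r * x⁻¹) * x = r by group, hr]
      decide
    have hrefl : cs.IsReflection (x * r * x⁻¹) := by
      have : cs.IsReflection r := cs.isReflection_of_mem_invSet (by rw [cs.mem_invSet]; exact hr)
      exact this.conj x
    have := cs.mem_invSet_longest hlong hrefl
    rw [cs.mem_invSet] at this
    rw [this] at hnn
    exact one_ne_zero hnn
  have hsub : A ∪ Bs ⊆ cs.invSet w₀ := by
    intro t ht
    rw [Finset.mem_union] at ht
    rcases ht with ht | ht
    · exact cs.mem_invSet_longest hlong (cs.isReflection_of_mem_invSet ht)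
    · rw [hBs, Finset.mem_image] at ht
      obtain ⟨r, hr, rfl⟩ := ht
      exact cs.mem_invSet_longest hlong ((cs.isReflection_of_mem_invSet hr).conj x)
  have hge : ℓ x + ℓ y ≤ ℓ w₀ := by
    calc ℓ x + ℓ y = A.card + Bs.card := by rw [cs.card_invSet, hBcard]
    _ = (A ∪ Bs).card := (Finset.card_union_of_disjoint hdisj).symm
    _ ≤ (cs.invSet w₀).card := Finset.card_le_card hsub
    _ = ℓ w₀ := cs.card_invSet w₀
  omega

end Counting

end CoxeterSystem

/-- Fix `w`. For `v`, letting `v_w` be the unique maximal-length element of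
`{x : x ≤_R v, x ≤ w}`, one has `v_w⁻¹ v ≤_R w⁻¹ w₀`. -/
theorem stmt8 {B W : Type*} [Group W] {M : CoxeterMatrix B} (cs : CoxeterSystem M W)
    [Finite W] (w₀ : W) (hlong : ∀ u : W, cs.length u ≤ cs.length w₀)
    (w v vw : W)
    (hmem : rWeak cs vw v ∧ bruhat cs vw w)
    (hmax : ∀ x : W, rWeak cs x v → bruhat cs x w → cs.length x ≤ cs.length vw) :
    rWeak cs (vw⁻¹ * v) (w⁻¹ * w₀) := by
  classical
  have : Fintype W := Fintype.ofFinite W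
  obtain ⟨hrw, hb⟩ := hmem
  set z := vw⁻¹ * v with hz
  have E : cs.length (w * z) = cs.length w + cs.length z :=
    cs.key_length_add v (cs.length z) vw w (le_refl _) hrw hb hmax
  have L1a : cs.length w + cs.length (w⁻¹ * w₀) = cs.length w₀ :=
    cs.length_add_of_longest hlong w (w⁻¹ * w₀) (by group)
  have L1b : cs.length (w * z) + cs.length (z⁻¹ * (w⁻¹ * w₀)) = cs.length w₀ :=
    cs.length_add_of_longest hlong (w * z) (z⁻¹ * (w⁻¹ * w₀)) (by group)
  show cs.length z + cs.length (z⁻¹ * (w⁻¹ * w₀)) = cs.length (w⁻¹ * w₀)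
  omega
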